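/- Let S be a finite set with |S| = n, let {S_L, S_R} be a bipartition of S into nonempty blocks, and let 𝒜 be a nondegenerate hierarchy over S. Then: (i) the number of clusters of 𝒜 that are incompatible with {S_L, S_R} is at most n − 2; (ii) the number of clusters of 𝒜 both of whose children are incompatible with {S_L, S_R} is at most min(|S_L|, |S_R|) − 1; and consequently (iii) Σ_{I∈𝒜} θ( #{A ∈ children(I,𝒜) : A is incompatible with {S_L, S_R}} ) ≤ n + min(|S_L|, |S_R|) − 3, where θ(x) = (x² + x)/2. -/

import Mathlib

open scoped Classical

namespace TreeDist

variable {α : Type*} [DecidableEq α]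

/-- Two finite sets are compatible if they are disjoint or nested. -/
def Compatible (A B : Finset α) : Prop :=
  A ∩ B = ∅ ∨ A ⊆ B ∨ B ⊆ A

/-- A hierarchy over `S`: a laminar family of nonempty subsets of `S`
containing `S` and all singletons. -/
def IsHierarchy (S : Finset α) (F : Finset (Finset α)) : Prop :=
  (∀ A ∈ F, A ⊆ S ∧ A.Nonempty) ∧
  (∀ A ∈ F, ∀ B ∈ F, Compatible A B) ∧
  S ∈ F ∧ ∀ i ∈ S, ({i} : Finset α) ∈ F

/-- A nondegenerate (binary) hierarchy: a hierarchy with `2|S| - 1` clusters,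
equivalently a maximal laminar family. -/
def Nondeg (S : Finset α) (F : Finset (Finset α)) : Prop :=
  IsHierarchy S F ∧ F.card = 2 * S.card - 1

/-- `P` is the parent of `I` in the family `F`: the smallest cluster of `F`
strictly containing `I`. -/
def IsParent (F : Finset (Finset α)) (I P : Finset α) : Prop :=
  P ∈ F ∧ I ⊂ P ∧ ∀ Q ∈ F, I ⊂ Q → P ⊆ Q

/-- `G` is the result of an NNI move on `F` at some grandchild `C`:
`G = (F \ {parent C}) ∪ {grandparent C \ C}`. -/
def IsNNIMove (F G : Finset (Finset α)) : Prop :=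
  ∃ C P GP, C ∈ F ∧ IsParent F C P ∧ IsParent F P GP ∧
    G = insert (GP \ C) (F.erase P)

/-- Restriction of a family of sets to `K`: `{A ∩ K : A ∈ F, A ∩ K ≠ ∅}`. -/
noncomputable def restrictFam (F : Finset (Finset α)) (K : Finset α) : Finset (Finset α) :=
  (F.image (· ∩ K)).filter fun A => A.Nonempty

/-- The cardinality of the smallest common ancestor of `i` and `j` in `F`, i.e. the
minimum cardinality of a cluster of `F` containing both `i` and `j`. -/
noncomputable def caCard (F : Finset (Finset α)) (i j : α) : ℕ :=
  sInf {n | ∃ A ∈ F, i ∈ A ∧ j ∈ A ∧ A.card = n}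

/-- Ultrametric representation `U(F)_{ij} = |ca(i,j)| - 1`. -/
noncomputable def Umat (F : Finset (Finset α)) (i j : α) : ℤ :=
  (caCard F i j : ℤ) - 1

/-- Cluster-cardinality distance `d_CC = (1/2) Σ_{i,j ∈ S} |U(F)_{ij} - U(G)_{ij}|`. -/
noncomputable def dCC (S : Finset α) (F G : Finset (Finset α)) : ℚ :=
  (1 / 2) * ∑ i ∈ S, ∑ j ∈ S, |((Umat F i j : ℚ)) - ((Umat G i j : ℚ))|

/-- Robinson–Foulds distance: half the size of the symmetric difference of cluster sets. -/
noncomputable def dRF (F G : Finset (Finset α)) : ℚ :=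
  (((F \ G) ∪ (G \ F)).card : ℚ) / 2

/-- Crossing dissimilarity: the number of incompatible pairs of clusters. -/
noncomputable def dCM (F G : Finset (Finset α)) : ℕ :=
  ((F ×ˢ G).filter fun p => ¬ Compatible p.1 p.2).card

/-- Depth of a cluster: the number of its strict ancestors in `F`. -/
noncomputable def depth (F : Finset (Finset α)) (I : Finset α) : ℕ :=
  (F.filter fun J => I ⊂ J).card

/-- The children of `I` in `F`: the clusters of `F` whose parent is `I`. -/
noncomputable def children (F : Finset (Finset α)) (I : Finset α) : Finset (Finset α) :=
  F.filter fun C => IsParent F C I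

/-- `η_{F,G}(I,J)`: the number of members of `(children I)|_J` incompatible with
the family `(children J)|_I`. -/
noncomputable def eta (F G : Finset (Finset α)) (I J : Finset α) : ℕ :=
  ((restrictFam (children F I) J).filter
    fun A => ∃ B ∈ restrictFam (children G J) I, ¬ Compatible A B).card

/-- `θ(x) = (x² + x)/2`. -/
def theta (x : ℕ) : ℚ := ((x : ℚ) ^ 2 + x) / 2

/-- Closed-form NNI navigation distance `d_Nav(F,G) = Σ_{I∈F, J∈G} θ(η_{F,G}(I,J))`. -/
noncomputable def dNav (F G : Finset (Finset α)) : ℚ :=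
  ∑ I ∈ F, ∑ J ∈ G, theta (eta F G I J)


section Aux

variable {S : Finset α} {F : Finset (Finset α)}

lemma hier_nested (h : IsHierarchy S F) {A B : Finset α} (hA : A ∈ F) (hB : B ∈ F)
    (hAB : (A ∩ B).Nonempty) : A ⊆ B ∨ B ⊆ A := by
  rcases h.2.1 A hA B hB with h1 | h2 | h3
  · rw [h1] at hAB; exact absurd rfl hAB.ne_empty
  · exact Or.inl h2
  · exact Or.inr h3

lemma parent_unique {I P P' : Finset α} (h : IsParent F I P) (h' : IsParent F I P') : P = P' :=
  subset_antisymm (h.2.2 P' h'.1 h'.2.1) (h'.2.2 P h.1 h.2.1)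

lemma mem_children {C I : Finset α} : C ∈ children F I ↔ C ∈ F ∧ IsParent F C I := by
  simp [children]

lemma parent_exists (h : IsHierarchy S F) {A : Finset α} (hA : A ∈ F) (hAS : A ≠ S) :
    ∃ P, IsParent F A P := by
  have hAsubS : A ⊂ S := ssubset_of_ne_of_subset hAS (h.1 A hA).1
  have hne : (F.filter fun Q => A ⊂ Q).Nonempty := ⟨S, by simp [h.2.2.1, hAsubS]⟩
  obtain ⟨P, hP, hPmin⟩ := Finset.exists_min_image _ Finset.card hne
  rw [Finset.mem_filter] at hP
  refine ⟨P, hP.1, hP.2, fun Q hQ hAQ => ?_⟩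
  have hQf : Q ∈ F.filter fun Q => A ⊂ Q := Finset.mem_filter.mpr ⟨hQ, hAQ⟩
  have hcard := hPmin Q hQf
  have hPQ : (P ∩ Q).Nonempty := by
    obtain ⟨a, ha⟩ := (h.1 A hA).2
    exact ⟨a, Finset.mem_inter.mpr ⟨hP.2.subset ha, hAQ.subset ha⟩⟩
  rcases hier_nested h hP.1 hQ hPQ with h1 | h2
  · exact h1
  · exact (Finset.eq_of_subset_of_card_le h2 hcard).ge

lemma child_cover (h : IsHierarchy S F) {I : Finset α} (hI : I ∈ F) {x : α} (hx : x ∈ I)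
    (hxI : ({x} : Finset α) ≠ I) : ∃ C ∈ children F I, x ∈ C := by
  have hxS : x ∈ S := (h.1 I hI).1 hx
  have hsing : ({x} : Finset α) ∈ F := h.2.2.2 x hxS
  have hmem : ({x} : Finset α) ∈ F.filter fun A => x ∈ A ∧ A ⊂ I :=
    Finset.mem_filter.mpr ⟨hsing, Finset.mem_singleton_self x,
      ssubset_of_ne_of_subset hxI (Finset.singleton_subset_iff.mpr hx)⟩
  obtain ⟨C, hC, hCmax⟩ := Finset.exists_max_image _ Finset.card ⟨_, hmem⟩
  rw [Finset.mem_filter] at hC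
  refine ⟨C, mem_children.mpr ⟨hC.1, hI, hC.2.2, fun Q hQ hCQ => ?_⟩, hC.2.1⟩
  have hint : (Q ∩ I).Nonempty := ⟨x, Finset.mem_inter.mpr ⟨hCQ.subset hC.2.1, hx⟩⟩
  rcases hier_nested h hQ hI hint with h1 | h2
  · rcases eq_or_ne Q I with rfl | hne
    · exact subset_rfl
    · exfalso
      have hQf : Q ∈ F.filter fun A => x ∈ A ∧ A ⊂ I :=
        Finset.mem_filter.mpr ⟨hQ, hCQ.subset hC.2.1, ssubset_of_ne_of_subset hne h1⟩
      exact absurd (hCmax Q hQf) (not_le_of_gt (Finset.card_lt_card hCQ))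
  · exact h2

lemma children_disjoint {I C C' : Finset α} (hC : C ∈ children F I) (hC' : C' ∈ children F I)
    (h : IsHierarchy S F) (hne : C ≠ C') : C ∩ C' = ∅ := by
  rw [mem_children] at hC hC'
  by_contra hcon
  have hint : (C ∩ C').Nonempty := Finset.nonempty_iff_ne_empty.mpr hcon
  rcases hier_nested h hC.1 hC'.1 hint with h1 | h2
  · have hss : C ⊂ C' := ssubset_of_ne_of_subset hne h1
    have hIC' : I ⊆ C' := hC.2.2.2 C' hC'.1 hss
    exact (hC'.2.2.1.not_subset hIC').elim
  · have hss : C' ⊂ C := ssubset_of_ne_of_subset (Ne.symm hne) h2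
    have hIC : I ⊆ C := hC'.2.2.2 C hC.1 hss
    exact (hC.2.2.1.not_subset hIC).elim


lemma child_nonempty (h : IsHierarchy S F) {C I : Finset α} (hC : C ∈ children F I) :
    C.Nonempty := (h.1 C (mem_children.mp hC).1).2

-- if I has children, it has at least two elements
lemma two_le_card_of_children (h : IsHierarchy S F) {I : Finset α}
    (hne : (children F I).Nonempty) : 2 ≤ I.card := by
  obtain ⟨C, hC⟩ := hne
  have hCI := (mem_children.mp hC).2.2.1
  have hCne := child_nonempty h hC
  have h1 : 1 ≤ C.card := Finset.card_pos.mpr hCne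
  have h2 : C.card < I.card := Finset.card_lt_card hCI
  omega

-- existence of a second child
lemma second_child (h : IsHierarchy S F) {I C : Finset α} (hI : I ∈ F)
    (hC : C ∈ children F I) : ∃ C' ∈ children F I, C' ≠ C ∧ (C' ∩ C = ∅) := by
  have hCI := (mem_children.mp hC).2.2.1
  obtain ⟨y, hyI, hyC⟩ := Finset.exists_of_ssubset hCI
  have hyIne : ({y} : Finset α) ≠ I := by
    intro hcon
    obtain ⟨c, hc⟩ := child_nonempty h hC
    have : c ∈ I := hCI.subset hc
    rw [← hcon, Finset.mem_singleton] at this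
    exact hyC (this ▸ hc)
  obtain ⟨C', hC', hyC'⟩ := child_cover h hI hyI hyIne
  have hne : C' ≠ C := fun hcon => hyC (hcon ▸ hyC')
  exact ⟨C', hC', hne, children_disjoint hC' hC h hne⟩

-- every x in I lies in some child, when I has children
lemma child_cover' (h : IsHierarchy S F) {I : Finset α} (hI : I ∈ F)
    (hne : (children F I).Nonempty) {x : α} (hx : x ∈ I) : ∃ C ∈ children F I, x ∈ C := by
  apply child_cover h hI hx
  intro hcon
  have := two_le_card_of_children h hne
  rw [← hcon] at this
  simp at this

-- if I ⊊ J and J has children, then I is contained in a child of J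
lemma sub_child (h : IsHierarchy S F) {I J : Finset α} (hI : I ∈ F) (hJ : J ∈ F)
    (hIJ : I ⊂ J) (hJch : (children F J).Nonempty) : ∃ C ∈ children F J, I ⊆ C := by
  obtain ⟨x, hx⟩ := (h.1 I hI).2
  obtain ⟨C, hC, hxC⟩ := child_cover' h hJ hJch (hIJ.subset hx)
  have hint : (I ∩ C).Nonempty := ⟨x, Finset.mem_inter.mpr ⟨hx, hxC⟩⟩
  rcases hier_nested h hI (mem_children.mp hC).1 hint with h1 | h2
  · exact ⟨C, hC, h1⟩
  · rcases eq_or_ne C I with rfl | hne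
    · exact ⟨C, hC, subset_rfl⟩
    · exfalso
      have hss : C ⊂ I := ssubset_of_ne_of_subset hne h2
      have := (mem_children.mp hC).2.2.2 I hI hss
      exact hIJ.not_subset this


-- a cluster is not a child of itself-ancestors... children are never S? not needed.

lemma no_children_of_card_one (h : IsHierarchy S F) {I : Finset α} (hI : I.card = 1) :
    children F I = ∅ := by
  rw [Finset.eq_empty_iff_forall_notMem]
  intro C hC
  have h2 := two_le_card_of_children h ⟨C, hC⟩
  omega

lemma two_le_children_card (h : IsHierarchy S F) {I : Finset α} (hI : I ∈ F)
    (hne : (children F I).Nonempty) : 2 ≤ (children F I).card := by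
  obtain ⟨C, hC⟩ := hne
  obtain ⟨C', hC', hne', _⟩ := second_child h hI hC
  exact Finset.one_lt_card.mpr ⟨C', hC', C, hC, hne'⟩

lemma sum_children_card (h : IsHierarchy S F) :
    ∑ I ∈ F, (children F I).card = F.card - 1 := by
  have hbi : F.erase S = F.biUnion (fun I => children F I) := by
    ext A
    simp only [Finset.mem_erase, Finset.mem_biUnion]
    constructor
    · rintro ⟨hAS, hA⟩
      obtain ⟨P, hP⟩ := parent_exists h hA hAS
      exact ⟨P, hP.1, mem_children.mpr ⟨hA, hP⟩⟩
    · rintro ⟨I, hI, hA⟩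
      rw [mem_children] at hA
      refine ⟨?_, hA.1⟩
      intro hcon
      exact hA.2.2.1.not_subset (by rw [hcon]; exact (h.1 I hI).1)
  have hdisj : ∀ I ∈ F, ∀ J ∈ F, I ≠ J → Disjoint (children F I) (children F J) := by
    intro I hI J hJ hne
    rw [Finset.disjoint_left]
    intro A hAI hAJ
    exact hne (parent_unique (mem_children.mp hAI).2 (mem_children.mp hAJ).2)
  have := Finset.card_biUnion hdisj
  rw [← hbi] at this
  rw [← this, Finset.card_erase_of_mem h.2.2.1]

lemma card_singletons (h : IsHierarchy S F) :
    (F.filter fun A => A.card = 1).card = S.card := by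
  have himg : F.filter (fun A => A.card = 1) = S.image (fun i => ({i} : Finset α)) := by
    ext A
    simp only [Finset.mem_filter, Finset.mem_image]
    constructor
    · rintro ⟨hA, hcard⟩
      obtain ⟨a, rfl⟩ := Finset.card_eq_one.mp hcard
      exact ⟨a, (h.1 _ hA).1 (Finset.mem_singleton_self a), rfl⟩
    · rintro ⟨i, hi, rfl⟩
      exact ⟨h.2.2.2 i hi, Finset.card_singleton i⟩
  rw [himg, Finset.card_image_of_injective _ Finset.singleton_injective]

lemma children_nonempty_of_two_le (h : IsHierarchy S F) {I : Finset α} (hI : I ∈ F)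
    (h2 : 2 ≤ I.card) : (children F I).Nonempty := by
  obtain ⟨x, hx⟩ := Finset.card_pos.mp (by omega : 0 < I.card)
  have hxI : ({x} : Finset α) ≠ I := by
    intro hcon; rw [← hcon] at h2; simp at h2
  obtain ⟨C, hC, _⟩ := child_cover h hI hx hxI
  exact ⟨C, hC⟩

lemma card_internal (hF : Nondeg S F) :
    (F.filter fun A => ¬ A.card = 1).card = S.card - 1 := by
  have h1 := Finset.card_filter_add_card_filter_not (s := F) (p := fun A => A.card = 1)
  rw [card_singletons hF.1] at h1
  have h2 := hF.2
  have hn : 2 ≤ S.card ∨ S.card ≤ 1 := by omega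
  rcases hn with hn | hn
  · omega
  · -- S.card ≤ 1 : F.card = 2*S.card - 1 ≤ 1
    omega

lemma children_card_le_two (hF : Nondeg S F) {I₀ : Finset α} :
    (children F I₀).card ≤ 2 := by
  obtain ⟨h, hcard⟩ := hF
  rcases Finset.eq_empty_or_nonempty (children F I₀) with he | hI₀ne
  · rw [he]; simp
  have hI₀F : I₀ ∈ F := (mem_children.mp hI₀ne.choose_spec).2.1
  have hI₀2 : 2 ≤ I₀.card := two_le_card_of_children h hI₀ne
  have hsum : ∑ I ∈ F.filter (fun A => ¬ A.card = 1), (children F I).card = F.card - 1 := by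
    rw [← sum_children_card h]
    apply Finset.sum_subset (Finset.filter_subset _ _)
    intro I hIF hInotin
    rw [Finset.mem_filter, not_and, not_not] at hInotin
    rw [no_children_of_card_one h (hInotin hIF), Finset.card_empty]
  have hIntcard : (F.filter fun A => ¬ A.card = 1).card = S.card - 1 := card_internal ⟨h, hcard⟩
  have hI₀Int : I₀ ∈ F.filter (fun A => ¬ A.card = 1) := by
    rw [Finset.mem_filter]; exact ⟨hI₀F, by omega⟩
  rw [← Finset.add_sum_erase _ _ hI₀Int] at hsum
  have hlow : ∀ I ∈ (F.filter (fun A => ¬ A.card = 1)).erase I₀, 2 ≤ (children F I).card := by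
    intro I hI
    have hIF := Finset.mem_filter.mp (Finset.mem_of_mem_erase hI)
    have hI2 : 2 ≤ I.card := by
      have := (h.1 I hIF.1).2
      have := Finset.card_pos.mpr this
      omega
    exact two_le_children_card h hIF.1 (children_nonempty_of_two_le h hIF.1 hI2)
  have hsum2 : ((F.filter (fun A => ¬ A.card = 1)).erase I₀).card • 2 ≤
      ∑ I ∈ (F.filter (fun A => ¬ A.card = 1)).erase I₀, (children F I).card :=
    Finset.card_nsmul_le_sum _ _ _ hlow
  have hecard : ((F.filter (fun A => ¬ A.card = 1)).erase I₀).card = S.card - 1 - 1 := by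
    rw [Finset.card_erase_of_mem hI₀Int, hIntcard]
  have hS2 : 2 ≤ S.card := le_trans hI₀2 (Finset.card_le_card (h.1 I₀ hI₀F).1)
  rw [hecard] at hsum2
  simp only [smul_eq_mul] at hsum2
  omega


variable {SL SR : Finset α}

lemma incompat_iff (h : IsHierarchy S F) (hd : Disjoint SL SR) (hu : SL ∪ SR = S)
    {A : Finset α} (hA : A ∈ F) :
    (¬ Compatible A SL ∨ ¬ Compatible A SR) ↔
      ((A ∩ SL).Nonempty ∧ (A ∩ SR).Nonempty ∧ A ≠ S) := by
  have hAS : A ⊆ S := (h.1 A hA).1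
  constructor
  · rintro (hc | hc) <;> rw [Compatible, not_or, not_or] at hc <;>
      obtain ⟨h1, h2, h3⟩ := hc
    · have hASL : (A ∩ SL).Nonempty := Finset.nonempty_iff_ne_empty.mpr h1
      obtain ⟨x, hxA, hxSL⟩ := Finset.not_subset.mp h2
      have hxSR : x ∈ SR := by
        have := hAS hxA
        rw [← hu, Finset.mem_union] at this
        tauto
      refine ⟨hASL, ⟨x, Finset.mem_inter.mpr ⟨hxA, hxSR⟩⟩, ?_⟩
      intro hcon
      exact h3 (by rw [hcon, ← hu]; exact Finset.subset_union_left)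
    · have hASR : (A ∩ SR).Nonempty := Finset.nonempty_iff_ne_empty.mpr h1
      obtain ⟨x, hxA, hxSR⟩ := Finset.not_subset.mp h2
      have hxSL : x ∈ SL := by
        have := hAS hxA
        rw [← hu, Finset.mem_union] at this
        tauto
      refine ⟨⟨x, Finset.mem_inter.mpr ⟨hxA, hxSL⟩⟩, hASR, ?_⟩
      intro hcon
      exact h3 (by rw [hcon, ← hu]; exact Finset.subset_union_right)
  · rintro ⟨hL, hR, hAS'⟩
    obtain ⟨x, hxS, hxA⟩ := Finset.exists_of_ssubset (ssubset_of_ne_of_subset hAS' hAS)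
    obtain ⟨yl, hyl⟩ := id hL
    obtain ⟨yr, hyr⟩ := id hR
    rw [Finset.mem_inter] at hyl hyr
    rw [← hu, Finset.mem_union] at hxS
    rcases hxS with hx | hx
    · left
      rw [Compatible, not_or, not_or]
      refine ⟨Finset.nonempty_iff_ne_empty.mp hL, ?_, ?_⟩
      · intro hsub
        exact (Finset.disjoint_left.mp hd) (hsub hyr.1) hyr.2
      · exact fun hsub => hxA (hsub hx)
    · right
      rw [Compatible, not_or, not_or]
      refine ⟨Finset.nonempty_iff_ne_empty.mp hR, ?_, ?_⟩
      · intro hsub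
        exact (Finset.disjoint_left.mp hd) hyl.2 (hsub hyl.1)
      · exact fun hsub => hxA (hsub hx)

lemma two_le_S_card (hL : SL.Nonempty) (hR : SR.Nonempty) (hd : Disjoint SL SR)
    (hu : SL ∪ SR = S) : 2 ≤ S.card := by
  rw [← hu, Finset.card_union_of_disjoint hd]
  have := Finset.card_pos.mpr hL
  have := Finset.card_pos.mpr hR
  omega

lemma part_one (hF : Nondeg S F) (hL : SL.Nonempty) (hR : SR.Nonempty)
    (hd : Disjoint SL SR) (hu : SL ∪ SR = S) :
    (F.filter fun I => ¬ Compatible I SL ∨ ¬ Compatible I SR).card ≤ S.card - 2 := by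
  obtain ⟨h, hcard⟩ := hF
  have hS2 : 2 ≤ S.card := two_le_S_card hL hR hd hu
  have hsub : (F.filter fun I => ¬ Compatible I SL ∨ ¬ Compatible I SR) ⊆
      (F.filter fun A => ¬ A.card = 1).erase S := by
    intro A hA
    rw [Finset.mem_filter] at hA
    obtain ⟨hAF, hP⟩ := hA
    rw [incompat_iff h hd hu hAF] at hP
    obtain ⟨hASL, hASR, hAS⟩ := hP
    rw [Finset.mem_erase, Finset.mem_filter]
    refine ⟨hAS, hAF, ?_⟩
    intro hone
    obtain ⟨a, rfl⟩ := Finset.card_eq_one.mp hone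
    obtain ⟨yl, hyl⟩ := hASL
    obtain ⟨yr, hyr⟩ := hASR
    rw [Finset.mem_inter, Finset.mem_singleton] at hyl hyr
    exact (Finset.disjoint_left.mp hd) (hyl.1 ▸ hyl.2) (hyr.1 ▸ hyr.2)
  have hScard : S ∈ F.filter fun A => ¬ A.card = 1 := by
    rw [Finset.mem_filter]; exact ⟨h.2.2.1, by omega⟩
  calc (F.filter fun I => ¬ Compatible I SL ∨ ¬ Compatible I SR).card
      ≤ ((F.filter fun A => ¬ A.card = 1).erase S).card := Finset.card_le_card hsub
    _ = S.card - 2 := by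
        rw [Finset.card_erase_of_mem hScard, card_internal ⟨h, hcard⟩]
        omega


lemma branch_count (h : IsHierarchy S F) (hSL : SL.Nonempty) :
    (F.filter fun I => (children F I).Nonempty ∧ ∀ A ∈ children F I, (A ∩ SL).Nonempty).card
      ≤ SL.card - 1 := by
  letI : LinearOrder α := IsWellOrder.linearOrder WellOrderingRel
  set T := F.filter fun I => (children F I).Nonempty ∧ ∀ A ∈ children F I, (A ∩ SL).Nonempty
    with hT
  set g : Finset α → Finset α := fun I =>
    (I ∩ SL).filter (fun y => ∀ C ∈ children F I, y ∈ C →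
      ¬ ∃ z ∈ C ∩ (I ∩ SL), ∀ w ∈ I ∩ SL, z ≤ w) with hg
  set f : Finset α → WithTop α := fun I => (g I).min with hf
  -- basic facts for members of T
  have hTfacts : ∀ I ∈ T, I ∈ F ∧ (children F I).Nonempty ∧
      (∀ A ∈ children F I, (A ∩ SL).Nonempty) := by
    intro I hI
    rw [hT, Finset.mem_filter] at hI
    exact ⟨hI.1, hI.2.1, hI.2.2⟩
  -- the minimum of I ∩ SL
  have hmin : ∀ I ∈ T, ∃ m, m ∈ I ∩ SL ∧ (∀ w ∈ I ∩ SL, m ≤ w) ∧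
      ∃ C₀ ∈ children F I, m ∈ C₀ := by
    intro I hI
    obtain ⟨hIF, hch, hall⟩ := hTfacts I hI
    have hne : (I ∩ SL).Nonempty := by
      obtain ⟨C, hC⟩ := hch
      obtain ⟨a, ha⟩ := hall C hC
      rw [Finset.mem_inter] at ha
      exact ⟨a, Finset.mem_inter.mpr ⟨((mem_children.mp hC).2.2.1).subset ha.1, ha.2⟩⟩
    refine ⟨(I ∩ SL).min' hne, (I ∩ SL).min'_mem hne, fun w hw => Finset.min'_le _ _ hw, ?_⟩
    have hm : (I ∩ SL).min' hne ∈ I := Finset.mem_inter.mp ((I ∩ SL).min'_mem hne) |>.1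
    exact child_cover' h hIF hch hm
  -- membership criterion for g I
  have hgmem : ∀ I ∈ T, ∀ m, m ∈ I ∩ SL → (∀ w ∈ I ∩ SL, m ≤ w) →
      ∀ y, (y ∈ g I ↔ y ∈ I ∩ SL ∧ ∀ C ∈ children F I, y ∈ C → m ∉ C) := by
    intro I hI m hm hmmin y
    rw [hg]
    simp only [Finset.mem_filter]
    constructor
    · rintro ⟨hy, hQ⟩
      refine ⟨hy, fun C hC hyC hmC => ?_⟩
      exact hQ C hC hyC ⟨m, Finset.mem_inter.mpr ⟨hmC, hm⟩, hmmin⟩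
    · rintro ⟨hy, hQ⟩
      refine ⟨hy, fun C hC hyC => ?_⟩
      rintro ⟨z, hz, hzmin⟩
      rw [Finset.mem_inter] at hz
      have hzm : z = m := le_antisymm (hzmin m hm) (hmmin z hz.2)
      exact hQ C hC hyC (hzm ▸ hz.1)
  -- nonemptiness of g I
  have hgne : ∀ I ∈ T, (g I).Nonempty := by
    intro I hI
    obtain ⟨hIF, hch, hall⟩ := hTfacts I hI
    obtain ⟨m, hm, hmmin, C₀, hC₀, hmC₀⟩ := hmin I hI
    obtain ⟨C', hC', hC'ne, hC'disj⟩ := second_child h hIF hC₀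
    obtain ⟨y, hy⟩ := hall C' hC'
    rw [Finset.mem_inter] at hy
    have hyI : y ∈ I ∩ SL :=
      Finset.mem_inter.mpr ⟨((mem_children.mp hC').2.2.1).subset hy.1, hy.2⟩
    refine ⟨y, (hgmem I hI m hm hmmin y).mpr ⟨hyI, fun C hC hyC hmC => ?_⟩⟩
    have hCC' : C = C' := by
      by_contra hne
      have := children_disjoint hC hC' h hne
      have : y ∈ C ∩ C' := Finset.mem_inter.mpr ⟨hyC, hy.1⟩
      rw [children_disjoint hC hC' h hne] at this
      exact absurd this (Finset.notMem_empty y)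
    rw [hCC'] at hmC
    have : m ∈ C' ∩ C₀ := Finset.mem_inter.mpr ⟨hmC, hmC₀⟩
    rw [hC'disj] at this
    exact absurd this (Finset.notMem_empty m)
  -- f I determines an element of g I
  have hgsub : ∀ I y, y ∈ g I → y ∈ I ∩ SL := by
    intro I y hy
    simp only [hg, Finset.mem_filter] at hy
    exact hy.1
  have hfval : ∀ I ∈ T, ∃ y : α, f I = ↑y ∧ y ∈ g I ∧ ∀ w ∈ g I, y ≤ w := by
    intro I hI
    obtain ⟨y, hy⟩ := Finset.min_of_nonempty (hgne I hI)
    refine ⟨y, hy, Finset.mem_of_min hy, fun w hw => ?_⟩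
    have h2 : (g I).min ≤ ↑w := Finset.min_le hw
    rw [hy] at h2
    exact WithTop.coe_le_coe.mp h2
  -- elements of g I are not the overall min of I ∩ SL
  have hne_min : ∀ I ∈ T, ∀ m, m ∈ I ∩ SL → (∀ w ∈ I ∩ SL, m ≤ w) →
      ∀ y ∈ g I, m < y := by
    intro I hI m hm hmmin y hy
    obtain ⟨hIF, hch, _⟩ := hTfacts I hI
    rw [hgmem I hI m hm hmmin y] at hy
    obtain ⟨hyI, hQ⟩ := hy
    have hyI' : y ∈ I := (Finset.mem_inter.mp hyI).1
    obtain ⟨Cy, hCy, hyCy⟩ := child_cover' h hIF hch hyI'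
    have : m ∉ Cy := hQ Cy hCy hyCy
    have hne : m ≠ y := fun hcon => this (hcon ▸ hyCy)
    exact lt_of_le_of_ne (hmmin y hyI) hne
  -- key: the strict-subset contradiction
  have key : ∀ I ∈ T, ∀ J ∈ T, I ⊂ J → f I = f J → False := by
    intro I hI J hJ hIJ hfIJ
    obtain ⟨hIF, hIch, _⟩ := hTfacts I hI
    obtain ⟨hJF, hJch, _⟩ := hTfacts J hJ
    obtain ⟨y, hfJ, hygJ, hymin⟩ := hfval J hJ
    have hygI : y ∈ g I := by
      have heq : (g I).min = ↑y := hfIJ.trans hfJ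
      exact Finset.mem_of_min heq
    obtain ⟨mI, hmI, hmImin, CI, hCI, hmICI⟩ := hmin I hI
    obtain ⟨mJ, hmJ, hmJmin, CJ, hCJ, hmJCJ⟩ := hmin J hJ
    -- mI < y
    have hmIy : mI < y := hne_min I hI mI hmI hmImin y hygI
    -- I is contained in a child C of J
    obtain ⟨C, hC, hIC⟩ := sub_child h hIF hJF hIJ hJch
    -- y ∈ C, so mJ ∉ C
    have hyI : y ∈ I := (Finset.mem_inter.mp (hgsub I y hygI)).1
    have hyC : y ∈ C := hIC hyI
    have hmJnC : mJ ∉ C := by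
      rw [hgmem J hJ mJ hmJ hmJmin y] at hygJ
      exact hygJ.2 C hC hyC
    -- mI ∈ g J
    have hmIgJ : mI ∈ g J := by
      rw [hgmem J hJ mJ hmJ hmJmin mI]
      have hmII : mI ∈ I := (Finset.mem_inter.mp hmI).1
      have hmIC : mI ∈ C := hIC hmII
      refine ⟨Finset.mem_inter.mpr ⟨hIJ.subset hmII, (Finset.mem_inter.mp hmI).2⟩,
        fun C' hC' hmIC' hmJC' => ?_⟩
      have hCC' : C' = C := by
        by_contra hne
        have hd := children_disjoint hC' hC h hne
        have : mI ∈ C' ∩ C := Finset.mem_inter.mpr ⟨hmIC', hmIC⟩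
        rw [hd] at this
        exact absurd this (Finset.notMem_empty mI)
      exact hmJnC (hCC' ▸ hmJC')
    have := hymin mI hmIgJ
    exact absurd (lt_of_lt_of_le hmIy this) (lt_irrefl mI)
  -- the injection into SL.erase (min SL)
  have hmaps : ∀ I ∈ T, f I ∈ (SL.erase (SL.min' hSL)).map ⟨WithTop.some, WithTop.coe_injective⟩ := by
    intro I hI
    obtain ⟨y, hfI, hygI, _⟩ := hfval I hI
    obtain ⟨mI, hmI, hmImin, _, _, _⟩ := hmin I hI
    have hySL : y ∈ SL := (Finset.mem_inter.mp (hgsub I y hygI)).2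
    have hmIy : mI < y := hne_min I hI mI hmI hmImin y hygI
    have hymin : y ≠ SL.min' hSL := by
      intro hcon
      have h1 : y ≤ mI := hcon ▸ Finset.min'_le SL mI (Finset.mem_inter.mp hmI).2
      exact absurd (lt_of_le_of_lt h1 hmIy) (lt_irrefl y)
    rw [hfI]
    exact Finset.mem_map_of_mem _ (Finset.mem_erase.mpr ⟨hymin, hySL⟩)
  have hinj : (↑T : Set (Finset α)).InjOn f := by
    intro I hI J hJ hfIJ
    rw [Finset.mem_coe] at hI hJ
    by_contra hne
    obtain ⟨y, hfI, hygI, _⟩ := hfval I hI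
    have hygJ : y ∈ g J := by
      have heq : (g J).min = ↑y := hfIJ.symm.trans hfI
      exact Finset.mem_of_min heq
    have hyI : y ∈ I := (Finset.mem_inter.mp (hgsub I y hygI)).1
    have hyJ : y ∈ J := (Finset.mem_inter.mp (hgsub J y hygJ)).1
    have hIF : I ∈ F := (hTfacts I hI).1
    have hJF : J ∈ F := (hTfacts J hJ).1
    rcases hier_nested h hIF hJF ⟨y, Finset.mem_inter.mpr ⟨hyI, hyJ⟩⟩ with h1 | h2
    · exact key I hI J hJ (ssubset_of_ne_of_subset hne h1) hfIJ
    · exact key J hJ I hI (ssubset_of_ne_of_subset (Ne.symm hne) h2) hfIJ.symm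
  have himg : ((SL.erase (SL.min' hSL)).map ⟨WithTop.some, WithTop.coe_injective⟩).card
      = SL.card - 1 := by
    rw [Finset.card_map, Finset.card_erase_of_mem (Finset.min'_mem SL hSL)]
  calc T.card ≤ ((SL.erase (SL.min' hSL)).map ⟨WithTop.some, WithTop.coe_injective⟩).card :=
        Finset.card_le_card_of_injOn f hmaps hinj
    _ = SL.card - 1 := himg


lemma part_two (hF : Nondeg S F) (hL : SL.Nonempty) (hR : SR.Nonempty)
    (hd : Disjoint SL SR) (hu : SL ∪ SR = S) :
    (F.filter fun I => (children F I).Nonempty ∧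
        ∀ A ∈ children F I, ¬ Compatible A SL ∨ ¬ Compatible A SR).card
      ≤ min SL.card SR.card - 1 := by
  obtain ⟨h, hcard⟩ := hF
  have hsubL : (F.filter fun I => (children F I).Nonempty ∧
        ∀ A ∈ children F I, ¬ Compatible A SL ∨ ¬ Compatible A SR) ⊆
      F.filter fun I => (children F I).Nonempty ∧ ∀ A ∈ children F I, (A ∩ SL).Nonempty := by
    intro I hI
    rw [Finset.mem_filter] at hI ⊢
    refine ⟨hI.1, hI.2.1, fun A hA => ?_⟩
    exact ((incompat_iff h hd hu (mem_children.mp hA).1).mp (hI.2.2 A hA)).1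
  have hsubR : (F.filter fun I => (children F I).Nonempty ∧
        ∀ A ∈ children F I, ¬ Compatible A SL ∨ ¬ Compatible A SR) ⊆
      F.filter fun I => (children F I).Nonempty ∧ ∀ A ∈ children F I, (A ∩ SR).Nonempty := by
    intro I hI
    rw [Finset.mem_filter] at hI ⊢
    refine ⟨hI.1, hI.2.1, fun A hA => ?_⟩
    exact ((incompat_iff h hd hu (mem_children.mp hA).1).mp (hI.2.2 A hA)).2.1
  have h1 := le_trans (Finset.card_le_card hsubL) (branch_count h hL)
  have h2 := le_trans (Finset.card_le_card hsubR) (branch_count h hR)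
  rcases le_total SL.card SR.card with hle | hle
  · rw [min_eq_left hle]; exact h1
  · rw [min_eq_right hle]; exact h2


lemma sum_incompat_children (hF : Nondeg S F) (hL : SL.Nonempty) (hR : SR.Nonempty)
    (hd : Disjoint SL SR) (hu : SL ∪ SR = S) :
    ∑ I ∈ F, ((children F I).filter
        fun A => ¬ Compatible A SL ∨ ¬ Compatible A SR).card ≤ S.card - 2 := by
  obtain ⟨h, hcard⟩ := hF
  have hdisj : ∀ I ∈ F, ∀ J ∈ F, I ≠ J → Disjoint
      ((children F I).filter fun A => ¬ Compatible A SL ∨ ¬ Compatible A SR)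
      ((children F J).filter fun A => ¬ Compatible A SL ∨ ¬ Compatible A SR) := by
    intro I hI J hJ hne
    rw [Finset.disjoint_left]
    intro A hAI hAJ
    rw [Finset.mem_filter] at hAI hAJ
    exact hne (parent_unique (mem_children.mp hAI.1).2 (mem_children.mp hAJ.1).2)
  rw [← Finset.card_biUnion hdisj]
  refine le_trans (Finset.card_le_card ?_) (part_one ⟨h, hcard⟩ hL hR hd hu)
  intro A hA
  rw [Finset.mem_biUnion] at hA
  obtain ⟨I, hI, hAI⟩ := hA
  rw [Finset.mem_filter] at hAI ⊢
  exact ⟨(mem_children.mp hAI.1).1, hAI.2⟩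

lemma theta_le {k : ℕ} (hk : k ≤ 2) :
    theta k ≤ (k : ℚ) + (if 2 ≤ k then 1 else 0) := by
  interval_cases k <;> norm_num [theta]

lemma part_three (hF : Nondeg S F) (hL : SL.Nonempty) (hR : SR.Nonempty)
    (hd : Disjoint SL SR) (hu : SL ∪ SR = S) :
    (∑ I ∈ F, theta (((children F I).filter
        fun A => ¬ Compatible A SL ∨ ¬ Compatible A SR).card))
      ≤ (S.card : ℚ) + (min SL.card SR.card : ℚ) - 3 := by
  set k : Finset α → ℕ := fun I => ((children F I).filter
      fun A => ¬ Compatible A SL ∨ ¬ Compatible A SR).card with hk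
  have hk2 : ∀ I, k I ≤ 2 := fun I =>
    le_trans (Finset.card_le_card (Finset.filter_subset _ _)) (children_card_le_two hF)
  have hstep : ∀ I ∈ F, theta (k I) ≤ (k I : ℚ) + (if 2 ≤ k I then 1 else 0) :=
    fun I _ => theta_le (hk2 I)
  have hsum1 : (∑ I ∈ F, theta (k I)) ≤
      ∑ I ∈ F, ((k I : ℚ) + (if 2 ≤ k I then 1 else 0)) := Finset.sum_le_sum hstep
  rw [Finset.sum_add_distrib] at hsum1
  -- first summand
  have hc1 : (∑ I ∈ F, (k I : ℚ)) ≤ (S.card : ℚ) - 2 := by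
    have hnat := sum_incompat_children hF hL hR hd hu
    have hS2 : 2 ≤ S.card := two_le_S_card hL hR hd hu
    have : ((∑ I ∈ F, k I : ℕ) : ℚ) ≤ ((S.card - 2 : ℕ) : ℚ) := Nat.cast_le.mpr hnat
    rw [Nat.cast_sub hS2] at this
    push_cast at this ⊢
    exact this
  -- second summand
  have hc2 : (∑ I ∈ F, (if 2 ≤ k I then (1 : ℚ) else 0)) ≤ (min SL.card SR.card : ℚ) - 1 := by
    rw [Finset.sum_boole]
    have hsub : F.filter (fun I => 2 ≤ k I) ⊆ F.filter fun I => (children F I).Nonempty ∧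
        ∀ A ∈ children F I, ¬ Compatible A SL ∨ ¬ Compatible A SR := by
      intro I hI
      rw [Finset.mem_filter] at hI ⊢
      obtain ⟨hIF, hkI⟩ := hI
      have hfle : ((children F I).filter
          fun A => ¬ Compatible A SL ∨ ¬ Compatible A SR) ⊆ children F I :=
        Finset.filter_subset _ _
      have heq : (children F I).filter
          (fun A => ¬ Compatible A SL ∨ ¬ Compatible A SR) = children F I := by
        apply Finset.eq_of_subset_of_card_le hfle
        calc (children F I).card ≤ 2 := children_card_le_two hF
          _ ≤ k I := hkI
          _ = _ := rfl
      refine ⟨hIF, ?_, fun A hA => ?_⟩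
      · rw [← heq]
        exact Finset.card_pos.mp (lt_of_lt_of_le (by norm_num : (0:ℕ) < 2) hkI)
      · rw [← heq] at hA
        exact (Finset.mem_filter.mp hA).2
    have hcard := le_trans (Finset.card_le_card hsub) (part_two hF hL hR hd hu)
    have hm1 : 1 ≤ min SL.card SR.card := by
      have := Finset.card_pos.mpr hL
      have := Finset.card_pos.mpr hR
      omega
    have : ((F.filter (fun I => 2 ≤ k I)).card : ℚ) ≤ ((min SL.card SR.card - 1 : ℕ) : ℚ) :=
      Nat.cast_le.mpr hcard
    rw [Nat.cast_sub hm1] at this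
    push_cast at this ⊢
    exact this
  calc (∑ I ∈ F, theta (k I)) ≤ _ := hsum1
    _ ≤ ((S.card : ℚ) - 2) + ((min SL.card SR.card : ℚ) - 1) := add_le_add hc1 hc2
    _ = (S.card : ℚ) + (min SL.card SR.card : ℚ) - 3 := by ring

end Aux

theorem incompatibility_counts (S SL SR : Finset α)
    (hL : SL.Nonempty) (hR : SR.Nonempty) (hd : Disjoint SL SR) (hu : SL ∪ SR = S)
    (F : Finset (Finset α)) (hF : Nondeg S F) :
    (F.filter fun I => ¬ Compatible I SL ∨ ¬ Compatible I SR).card ≤ S.card - 2 ∧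
    (F.filter fun I => (children F I).Nonempty ∧
        ∀ A ∈ children F I, ¬ Compatible A SL ∨ ¬ Compatible A SR).card
      ≤ min SL.card SR.card - 1 ∧
    (∑ I ∈ F, theta (((children F I).filter
        fun A => ¬ Compatible A SL ∨ ¬ Compatible A SR).card))
      ≤ (S.card : ℚ) + (min SL.card SR.card : ℚ) - 3 :=
  ⟨part_one hF hL hR hd hu, part_two hF hL hR hd hu, part_three hF hL hR hd hu⟩

end TreeDist
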